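/- Let n ≥ 1 and let f : Mₙ(ℂ) → Mₙ(ℂ) be a bijective ℂ-linear map. Then f(U(n)) = U(n) if and only if there exist unitary matrices u, v ∈ U(n) such that either f(x) = u x v for all x ∈ Mₙ(ℂ), or f(x) = u xᵀ v for all x ∈ Mₙ(ℂ). -/

import Mathlib

open Matrix


private lemma mulEntry {n : ℕ} (A B : Matrix (Fin n) (Fin n) ℂ) (i k l j : Fin n) :
    ((A * single k l 1 * B) : Matrix (Fin n) (Fin n) ℂ) i j = A i k * B l j := by
  rw [mul_assoc, Matrix.mul_apply]
  rw [Fintype.sum_eq_single k (fun t ht => by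
    rw [Matrix.single_mul_apply_of_ne _ _ _ _ _ ht, mul_zero])]
  rw [Matrix.single_mul_apply_same, one_mul]

private lemma prim {n : ℕ} {A B : Matrix (Fin n) (Fin n) ℂ}
    (h : ∀ m : Matrix (Fin n) (Fin n) ℂ, A * m * B + B * m * A = 0) : A = 0 ∨ B = 0 := by
  by_contra hc
  push_neg at hc
  obtain ⟨hA, hB⟩ := hc
  obtain ⟨i0, k0, h0⟩ : ∃ i k, A i k ≠ 0 := by
    by_contra h'; push_neg at h'; exact hA (by ext i j; simp [h'])
  obtain ⟨i1, k1, h1⟩ : ∃ i k, B i k ≠ 0 := by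
    by_contra h'; push_neg at h'; exact hB (by ext i j; simp [h'])
  have key : ∀ i k l j, A i k * B l j + B i k * A l j = 0 := by
    intro i k l j
    have := congrFun (congrFun (h (single k l 1)) i) j
    simpa [Matrix.add_apply, mulEntry] using this
  have hB0 : B i0 k0 ≠ 0 := by
    intro hz
    have := key i0 k0 i1 k1
    rw [hz, zero_mul, add_zero] at this
    exact mul_ne_zero h0 h1 this
  have h2 := key i0 k0 i0 k0
  have : A i0 k0 * B i0 k0 = 0 := by linear_combination h2 / 2
  exact mul_ne_zero h0 hB0 this

private lemma orForall {α : Type*} [AddCommGroup α] {P Q : α → Prop} (h : ∀ a, P a ∨ Q a)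
    (hP : ∀ a b, P a → P b → P (a - b)) (hQ : ∀ a b, Q a → Q b → Q (a - b)) :
    (∀ a, P a) ∨ (∀ a, Q a) := by
  by_contra hc
  push_neg at hc
  obtain ⟨⟨a, ha⟩, ⟨b, hb⟩⟩ := hc
  have hQa : Q a := (h a).resolve_left ha
  have hPb : P b := (h b).resolve_right hb
  rcases h (a + b) with hs | hs
  · exact ha (by simpa using hP _ _ hs hPb)
  · exact hb (by simpa using hQ _ _ hs hQa)


-- step C part 1: a multiplicative bijective linear map is x ↦ a x b with b*a=1=a*b
private lemma intertwine {n : ℕ} (hn : 1 ≤ n)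
    (G : Matrix (Fin n) (Fin n) ℂ ≃ₗ[ℂ] Matrix (Fin n) (Fin n) ℂ)
    (hmul : ∀ x y, G (x * y) = G x * G y) :
    ∃ a b : Matrix (Fin n) (Fin n) ℂ, a * b = 1 ∧ b * a = 1 ∧ ∀ x, G x = a * x * b := by
  classical
  set o : Fin n := ⟨0, hn⟩
  set F : Fin n → Fin n → Matrix (Fin n) (Fin n) ℂ := fun i j => G (single i j 1) with hF
  have hFmul : ∀ i j k l, F i j * F k l = if j = k then F i l else 0 := by
    intro i j k l
    rw [← hmul]
    by_cases h : j = k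
    · subst h; rw [if_pos rfl, single_mul_single_same, one_mul]
    · rw [if_neg h, single_mul_single_of_ne (h := h), map_zero]
  have hFoo : F o o ≠ 0 := by
    intro h
    have : single o o (1:ℂ) = 0 := by
      apply G.injective; rw [map_zero]; exact h
    have := congrFun (congrFun this o) o
    simp at this
  obtain ⟨p, q, hpq⟩ : ∃ p q, F o o p q ≠ 0 := by
    by_contra h'; push_neg at h'; exact hFoo (by ext i j; simp [h'])
  set a : Matrix (Fin n) (Fin n) ℂ := Matrix.of (fun r i => F i o r q) with ha
  set b : Matrix (Fin n) (Fin n) ℂ := Matrix.of (fun j s => F o j p s / F o o p q) with hb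
  have hba : b * a = 1 := by
    ext j i
    rw [Matrix.mul_apply]
    have : ∀ s, b j s * a s i = F o j p s * F i o s q / F o o p q := by
      intro s; simp only [ha, hb, Matrix.of_apply]; ring
    rw [Finset.sum_congr rfl (fun s _ => this s), ← Finset.sum_div, ← Matrix.mul_apply, hFmul]
    by_cases h : j = i
    · subst h; rw [if_pos rfl, div_self hpq, Matrix.one_apply_eq]
    · rw [if_neg h, Matrix.zero_apply, zero_div, (Matrix.one_apply_ne h).symm]
  have hab : a * b = 1 := mul_eq_one_comm.mpr hba
  refine ⟨a, b, hab, hba, ?_⟩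
  have key : ∀ i j, F i j * a = a * single i j 1 := by
    intro i j
    ext r k
    rw [Matrix.mul_apply]
    have : ∀ s, F i j r s * a s k = F i j r s * F k o s q := by
      intro s; simp only [ha, Matrix.of_apply]
    rw [Finset.sum_congr rfl (fun s _ => this s), ← Matrix.mul_apply, hFmul]
    by_cases h : j = k
    · subst h
      rw [if_pos rfl, Matrix.mul_single_apply_same, mul_one]
      simp [ha]
    · rw [if_neg h, Matrix.zero_apply]
      exact (Matrix.mul_single_apply_of_ne 1 i j r k
        (fun hc => h hc.symm) a).symm
  intro x
  have hx : G x * a = a * x := by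
    conv_lhs => rw [matrix_eq_sum_single x]
    conv_rhs => rw [matrix_eq_sum_single x]
    rw [map_sum, Finset.sum_mul, Finset.mul_sum]
    refine Finset.sum_congr rfl (fun i _ => ?_)
    rw [map_sum, Finset.sum_mul, Finset.mul_sum]
    refine Finset.sum_congr rfl (fun j _ => ?_)
    have hsm : (single i j (x i j) : Matrix (Fin n) (Fin n) ℂ)
        = x i j • single i j 1 := by
      rw [smul_single, smul_eq_mul, mul_one]
    rw [hsm, LinearEquiv.map_smul, smul_mul_assoc, key, mul_smul_comm]
  calc G x = G x * (a * b) := by rw [hab, mul_one]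
    _ = (G x * a) * b := by rw [mul_assoc]
    _ = a * x * b := by rw [hx]
private lemma inner_aux {n : ℕ} (hn : 1 ≤ n)
    (G : Matrix (Fin n) (Fin n) ℂ ≃ₗ[ℂ] Matrix (Fin n) (Fin n) ℂ)
    (hmul : ∀ x y, G (x * y) = G x * G y)
    (hstar : ∀ x, G (star x) = star (G x)) :
    ∃ w ∈ Matrix.unitaryGroup (Fin n) ℂ, ∀ x, G x = w * x * star w := by
  classical
  obtain ⟨a, b, hab, hba, hG⟩ := intertwine hn G hmul
  set o : Fin n := ⟨0, hn⟩
  have hsab : star a * star b = 1 := by rw [← Matrix.star_mul, hba, star_one]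
  have hsba : star b * star a = 1 := by rw [← Matrix.star_mul, hab, star_one]
  have hkey : ∀ y : Matrix (Fin n) (Fin n) ℂ, a * y * b = star b * y * star a := by
    intro y
    have := hstar (star y)
    rw [star_star, hG, hG, Matrix.star_mul, Matrix.star_mul, star_star] at this
    rw [this, mul_assoc]
  set c : Matrix (Fin n) (Fin n) ℂ := star a * a with hc
  have hcomm : ∀ y, c * y = y * c := by
    intro y
    have h1 := congrArg (fun z => star a * z * a) (hkey y)
    calc c * y = star a * a * y * (b * a) := by rw [hba, mul_one]
    _ = star a * (a * y * b) * a := by noncomm_ring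
    _ = star a * (star b * y * star a) * a := by rw [hkey]
    _ = (star a * star b) * y * (star a * a) := by noncomm_ring
    _ = y * c := by rw [hsab, one_mul]
  obtain ⟨r, hr⟩ : c ∈ Set.range ⇑(Matrix.scalar (Fin n)) := by
    apply Matrix.mem_range_scalar_of_commute_single
    intro i j _
    exact (hcomm (single i j 1)).symm
  have hr' : c = r • (1 : Matrix (Fin n) (Fin n) ℂ) := by
    rw [← hr, Matrix.scalar_apply, Matrix.smul_one_eq_diagonal]
  -- r is a positive real
  have hrval : r = ((∑ s, Complex.normSq (a s o) : ℝ) : ℂ) := by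
    have h00 : c o o = r := by rw [hr']; simp [Matrix.smul_apply, Matrix.one_apply]
    rw [← h00, hc, Matrix.mul_apply]
    push_cast
    refine Finset.sum_congr rfl (fun s _ => ?_)
    rw [Matrix.star_apply]
    exact Complex.normSq_eq_conj_mul_self.symm
  have hcne : c ≠ 0 := by
    intro h0
    have : (1 : Matrix (Fin n) (Fin n) ℂ) = 0 := by
      calc (1 : Matrix (Fin n) (Fin n) ℂ) = star (b * a) := by rw [hba, star_one]
      _ = star a * star b := by rw [Matrix.star_mul]
      _ = star a * (a * b) * star b := by rw [hab, mul_one]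
      _ = c * (b * star b) := by rw [hc]; noncomm_ring
      _ = 0 := by rw [h0, zero_mul]
    exact one_ne_zero (congrFun (congrFun this o) o)
  have hrne : r ≠ 0 := fun h0 => hcne (by rw [hr', h0, zero_smul])
  have hρne : (∑ s, Complex.normSq (a s o) : ℝ) ≠ 0 := by
    intro h0; exact hrne (by rw [hrval, h0]; simp)
  have hρpos : 0 < (∑ s, Complex.normSq (a s o) : ℝ) :=
    ((Finset.sum_nonneg (fun s _ => Complex.normSq_nonneg (a s o))).lt_of_ne (Ne.symm hρne))
  set μ : ℝ := Real.sqrt (∑ s, Complex.normSq (a s o)) with hμ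
  have hμpos : 0 < μ := Real.sqrt_pos.mpr hρpos
  have hμsq : (μ : ℂ) * (μ : ℂ) = r := by
    rw [hrval]
    norm_cast
    exact Real.mul_self_sqrt hρpos.le
  set w : Matrix (Fin n) (Fin n) ℂ := ((μ : ℂ))⁻¹ • a with hw
  have hμne : (μ : ℂ) ≠ 0 := by exact_mod_cast hμpos.ne'
  have hsw : star w = ((μ : ℂ))⁻¹ • star a := by
    rw [hw, star_smul]
    congr 1
    simp [Complex.conj_ofReal]
  have hwu : star w * w = 1 := by
    rw [hsw, hw, smul_mul_smul_comm, ← hc, hr', smul_smul, ← hμsq]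
    rw [show ((μ:ℂ))⁻¹ * (μ:ℂ)⁻¹ * ((μ:ℂ) * (μ:ℂ)) = 1 by field_simp]
    rw [one_smul]
  refine ⟨w, Matrix.mem_unitaryGroup_iff'.mpr hwu, ?_⟩
  have hsa : star a = r • b := by
    calc star a = star a * (a * b) := by rw [hab, mul_one]
    _ = c * b := by rw [hc, mul_assoc]
    _ = r • b := by rw [hr', smul_mul_assoc, one_mul]
  intro x
  rw [hG, hw, hsw, hsa]
  rw [smul_mul_assoc, smul_mul_assoc, mul_smul_comm, mul_smul_comm, smul_smul, smul_smul]
  rw [show ((μ:ℂ))⁻¹ * ((μ:ℂ))⁻¹ * r = 1 by rw [← hμsq]; field_simp]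
  rw [one_smul]
private lemma hom_or_antihom {n : ℕ}
    (G : Matrix (Fin n) (Fin n) ℂ ≃ₗ[ℂ] Matrix (Fin n) (Fin n) ℂ)
    (hsq : ∀ x, G (x * x) = G x * G x) :
    (∀ x y, G (x * y) = G x * G y) ∨ (∀ x y, G (x * y) = G y * G x) := by
  have hJ : ∀ x y, G (x * y + y * x) = G x * G y + G y * G x := by
    intro x y
    have h := hsq (x + y)
    rw [show (x + y) * (x + y) = x * x + (x * y + y * x) + y * y by noncomm_ring,
      map_add G x y] at h
    rw [map_add, map_add] at h
    have h2 : G (x * y + y * x)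
        = (G x + G y) * (G x + G y) - G (x * x) - G (y * y) := by
      rw [← h]; abel
    rw [h2, hsq, hsq]; noncomm_ring
  have hT : ∀ x y, G (x * y * x) = G x * G y * G x := by
    intro x y
    have e : x * (x * y + y * x) + (x * y + y * x) * x
        = (x * y * x + x * y * x) + (x * x * y + y * (x * x)) := by noncomm_ring
    have h1 := hJ x (x * y + y * x)
    have h2 := hJ (x * x) y
    rw [e, map_add, map_add] at h1
    have h3 : G (x * y * x) + G (x * y * x)
        = G x * G (x * y + y * x) + G (x * y + y * x) * G x - (G (x * x) * G y + G y * G (x * x)) := by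
      rw [← h1, ← h2]; abel
    rw [hJ x y, hsq x] at h3
    have h4 : G (x * y * x) + G (x * y * x) = G x * G y * G x + G x * G y * G x := by
      rw [h3]; noncomm_ring
    have := congrArg (fun z => (2 : ℂ)⁻¹ • z) h4
    simpa [smul_add, ← two_smul ℂ, smul_smul] using this
  have hT2 : ∀ x y z, G (x * y * z + z * y * x) = G x * G y * G z + G z * G y * G x := by
    intro x y z
    have e : (x + z) * y * (x + z) = (x * y * x + z * y * z) + (x * y * z + z * y * x) := by
      noncomm_ring
    have h1 := hT (x + z) y
    rw [e, map_add G x z] at h1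
    rw [map_add, map_add] at h1
    have h2 : G (x * y * z + z * y * x)
        = (G x + G z) * G y * (G x + G z) - G (x * y * x) - G (z * y * z) := by
      rw [← h1]; abel
    rw [h2, hT, hT]; noncomm_ring
  -- Herstein identity
  have key : ∀ x y m, (G (x * y) - G x * G y) * m * (G (x * y) - G y * G x)
      + (G (x * y) - G y * G x) * m * (G (x * y) - G x * G y) = 0 := by
    intro x y m
    obtain ⟨z, rfl⟩ : ∃ z, G z = m := ⟨G.symm m, G.apply_symm_apply m⟩
    set a := G x
    set b := G y
    set c := G z
    set h := G (x * y) with hh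
    have hk : G (y * x) = a * b + b * a - h := by
      have := hJ x y
      rw [map_add] at this
      exact eq_sub_of_add_eq' this
    have e := hT2 (x * y) z (y * x)
    rw [show x * y * z * (y * x) + y * x * z * (x * y)
        = x * (y * z * y) * x + y * (x * z * x) * y by noncomm_ring,
      map_add, hT x (y * z * y), hT y (x * z * x), hT y z, hT x z, hk] at e
    have expand : (h - a * b) * c * (h - b * a) + (h - b * a) * c * (h - a * b)
        = (a * (b * c * b) * a + b * (a * c * a) * b)
          - (h * c * (a * b + b * a - h) + (a * b + b * a - h) * c * h) := by noncomm_ring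
    rw [expand, ← e, sub_self]
  have main : ∀ x y, (G (x * y) - G x * G y = 0) ∨ (G (x * y) - G y * G x = 0) :=
    fun x y => prim (key x y)
  have step1 : ∀ y, (∀ x, G (x * y) - G x * G y = 0) ∨ (∀ x, G (x * y) - G y * G x = 0) := by
    intro y
    apply orForall (fun x => main x y)
    · intro x1 x2 h1 h2
      simp only [sub_mul, map_sub]
      rw [sub_eq_zero] at h1 h2
      rw [h1, h2]; abel
    · intro x1 x2 h1 h2
      simp only [sub_mul, mul_sub, map_sub]
      rw [sub_eq_zero] at h1 h2
      rw [h1, h2]; abel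
  have step2 : (∀ y, ∀ x, G (x * y) - G x * G y = 0) ∨ (∀ y, ∀ x, G (x * y) - G y * G x = 0) := by
    apply orForall step1
    · intro y1 y2 h1 h2 x
      have e : x * (y1 - y2) = x * y1 - x * y2 := by noncomm_ring
      rw [e, map_sub, map_sub, mul_sub]
      have e1 := h1 x
      have e2 := h2 x
      rw [sub_eq_zero] at e1 e2
      rw [e1, e2]; abel
    · intro y1 y2 h1 h2 x
      have e : x * (y1 - y2) = x * y1 - x * y2 := by noncomm_ring
      rw [e, map_sub, map_sub, sub_mul]
      have e1 := h1 x
      have e2 := h2 x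
      rw [sub_eq_zero] at e1 e2
      rw [e1, e2]; abel
  rcases step2 with h | h
  · left; intro x y; have := h y x; rwa [sub_eq_zero] at this
  · right; intro x y; have := h y x; rwa [sub_eq_zero] at this


private lemma halve {V : Type*} [AddCommGroup V] [Module ℂ V] {a b : V}
    (h : a + a = b + b) : a = b := by
  have := congrArg (fun z => (2 : ℂ)⁻¹ • z) h
  simpa [← two_smul ℂ, smul_smul] using this

private lemma unit_expand {n : ℕ} (R S : Matrix (Fin n) (Fin n) ℂ) (c c' : ℂ) :
    (1 + c' • S) * (1 + c • R) = 1 + (c • R + c' • S + (c' * c) • (S * R)) := by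
  rw [mul_add, mul_one, add_mul, one_mul, smul_mul_smul_comm]
  abel

private lemma proj_step {n : ℕ}
    (G : Matrix (Fin n) (Fin n) ℂ ≃ₗ[ℂ] Matrix (Fin n) (Fin n) ℂ)
    (h1 : G 1 = 1)
    (hU : ∀ w, w ∈ Matrix.unitaryGroup (Fin n) ℂ → G w ∈ Matrix.unitaryGroup (Fin n) ℂ)
    (p : Matrix (Fin n) (Fin n) ℂ) (hps : star p = p) (hpi : p * p = p) :
    star (G p) = G p ∧ G p * G p = G p := by
  have hunit : ∀ l : ℂ, (starRingEnd ℂ) l * l = 1 →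
      (1 + (l - 1) • p) ∈ Matrix.unitaryGroup (Fin n) ℂ := by
    intro l hl
    rw [Matrix.mem_unitaryGroup_iff']
    rw [star_add, star_one, star_smul, RCLike.star_def, hps, unit_expand, hpi]
    have hc : ((l - 1) : ℂ) + (starRingEnd ℂ) (l - 1) + (starRingEnd ℂ) (l - 1) * (l - 1) = 0 := by
      simp only [map_sub, _root_.map_one]
      linear_combination hl
    rw [← add_smul, ← add_smul, hc, zero_smul, add_zero]
  set Q := G p with hQdef
  have hEq : ∀ l : ℂ, (starRingEnd ℂ) l * l = 1 →
      (l - 1) • Q + ((starRingEnd ℂ) (l - 1)) • star Q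
        + (((starRingEnd ℂ) (l - 1)) * (l - 1)) • (star Q * Q) = 0 := by
    intro l hl
    have hm := hU _ (hunit l hl)
    rw [map_add, _root_.map_smul, h1, Matrix.mem_unitaryGroup_iff'] at hm
    rw [star_add, star_one, star_smul, RCLike.star_def, unit_expand] at hm
    exact add_eq_left.mp hm
  have E1 := hEq (-1) (by norm_num)
  have E2 := hEq Complex.I (by simp [Complex.conj_I, Complex.I_mul_I])
  simp only [map_sub, _root_.map_one, map_neg, Complex.conj_I] at E1 E2
  have hQs : star Q = Q := by
    ext i j
    have e1 := congrFun (congrFun E1 i) j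
    have e2 := congrFun (congrFun E2 i) j
    simp only [Matrix.add_apply, Matrix.smul_apply, Matrix.zero_apply, smul_eq_mul] at e1 e2
    refine sub_eq_zero.mp ?_
    linear_combination (-Complex.I/2) * e1 + Complex.I * e2
      + (star Q i j - Q i j + Complex.I * (star Q * Q) i j) * Complex.I_sq
  have hQi : Q * Q = Q := by
    rw [hQs] at E1
    ext i j
    have e1 := congrFun (congrFun E1 i) j
    simp only [Matrix.add_apply, Matrix.smul_apply, Matrix.zero_apply, smul_eq_mul] at e1
    linear_combination e1 / 4
  exact ⟨hQs, hQi⟩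

private lemma orth_step {n : ℕ}
    (G : Matrix (Fin n) (Fin n) ℂ ≃ₗ[ℂ] Matrix (Fin n) (Fin n) ℂ)
    (h1 : G 1 = 1)
    (hU : ∀ w, w ∈ Matrix.unitaryGroup (Fin n) ℂ → G w ∈ Matrix.unitaryGroup (Fin n) ℂ)
    (p q : Matrix (Fin n) (Fin n) ℂ) (hps : star p = p) (hpi : p * p = p)
    (hqs : star q = q) (hqi : q * q = q) (hpq : p * q = 0) (hqp : q * p = 0) :
    G p * G q + G q * G p = 0 := by
  have hsum := proj_step G h1 hU (p + q) (by rw [star_add, hps, hqs])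
    (by rw [add_mul, mul_add, mul_add, hpi, hqi, hpq, hqp]; abel)
  have hp := proj_step G h1 hU p hps hpi
  have hq := proj_step G h1 hU q hqs hqi
  have e : G p * G q + G q * G p
      = (G p + G q) * (G p + G q) - G p * G p - G q * G q := by noncomm_ring
  rw [e, ← map_add, hsum.2, map_add, hp.2, hq.2]
  abel

private lemma herm_step {n : ℕ}
    (G : Matrix (Fin n) (Fin n) ℂ ≃ₗ[ℂ] Matrix (Fin n) (Fin n) ℂ)
    (h1 : G 1 = 1)
    (hU : ∀ w, w ∈ Matrix.unitaryGroup (Fin n) ℂ → G w ∈ Matrix.unitaryGroup (Fin n) ℂ)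
    (H : Matrix (Fin n) (Fin n) ℂ) (hH : star H = H) :
    star (G H) = G H ∧ G (H * H) = G H * G H := by
  classical
  have hH' : H.IsHermitian := hH
  set V : Matrix (Fin n) (Fin n) ℂ := (hH'.eigenvectorUnitary : Matrix (Fin n) (Fin n) ℂ) with hVdef
  have hVsV : star V * V = 1 := hH'.eigenvectorUnitary.2.1
  set d : Fin n → ℝ := hH'.eigenvalues with hddef
  set P : Fin n → Matrix (Fin n) (Fin n) ℂ :=
    fun k => V * single k k 1 * star V with hPdef
  have hEstar : ∀ k : Fin n, star (single k k (1:ℂ)) = single k k 1 := by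
    intro k
    ext i j
    simp only [Matrix.star_apply, Matrix.single, Matrix.of_apply]
    rw [show ((if k = j ∧ k = i then (1:ℂ) else 0)) = (if k = i ∧ k = j then (1:ℂ) else 0) by
      by_cases h1 : k = i <;> by_cases h2 : k = j <;> simp [h1, h2]]
    by_cases h : k = i ∧ k = j <;> simp [h]
  have hPstar : ∀ k, star (P k) = P k := by
    intro k
    rw [hPdef]
    simp only
    rw [Matrix.star_mul, Matrix.star_mul, star_star, hEstar, mul_assoc]
  have hPmul : ∀ k l, P k * P l = if k = l then P k else 0 := by
    intro k l
    rw [hPdef]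
    simp only
    have e : (V * single k k 1 * star V) * (V * single l l 1 * star V)
        = V * (single k k 1 * ((star V * V) * single l l 1)) * star V := by
      noncomm_ring
    rw [e, hVsV, one_mul]
    by_cases h : k = l
    · subst h
      rw [if_pos rfl, single_mul_single_same, one_mul]
    · rw [if_neg h, single_mul_single_of_ne (h := h), mul_zero, zero_mul]
  have hdiag : (Matrix.diagonal (RCLike.ofReal ∘ d) : Matrix (Fin n) (Fin n) ℂ)
      = ∑ k, (d k : ℂ) • single k k 1 := by
    ext i j
    simp only [Matrix.diagonal_apply, Matrix.sum_apply, Matrix.smul_apply,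
      Matrix.single, Matrix.of_apply, smul_eq_mul, Function.comp_apply]
    by_cases h : i = j
    · subst h
      rw [if_pos rfl]
      rw [Fintype.sum_eq_single i (fun k hk => by
        rw [if_neg (fun hc : k = i ∧ k = i => hk hc.1), mul_zero])]
      rw [if_pos ⟨rfl, rfl⟩, mul_one]
      rfl
    · rw [if_neg h]
      symm
      apply Finset.sum_eq_zero
      intro k _
      rw [if_neg, mul_zero]
      rintro ⟨rfl, rfl⟩
      exact h rfl
  have hsumH : H = ∑ k, (d k : ℂ) • P k := by
    have hst := hH'.spectral_theorem
    rw [hdiag, Unitary.conjStarAlgAut_apply, Finset.mul_sum, Finset.sum_mul] at hst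
    rw [hst]
    refine Finset.sum_congr rfl (fun k _ => ?_)
    rw [mul_smul_comm, smul_mul_assoc, hPdef]
  have hsumprod : ∀ (c : Fin n → ℂ) (X : Fin n → Matrix (Fin n) (Fin n) ℂ),
      (∑ k, c k • X k) * (∑ l, c l • X l) = ∑ k, ∑ l, (c k * c l) • (X k * X l) := by
    intro c X
    rw [Finset.sum_mul]
    refine Finset.sum_congr rfl (fun k _ => ?_)
    rw [Finset.mul_sum]
    refine Finset.sum_congr rfl (fun l _ => ?_)
    rw [smul_mul_smul_comm]
  have hsumH2 : H * H = ∑ k, ((d k : ℂ) * (d k)) • P k := by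
    rw [hsumH, hsumprod]
    refine Finset.sum_congr rfl (fun k _ => ?_)
    rw [Finset.sum_congr rfl (fun l (_ : l ∈ Finset.univ) => by rw [hPmul k l])]
    simp only [smul_ite, smul_zero]
    rw [Finset.sum_ite_eq]
    simp
  set Q : Fin n → Matrix (Fin n) (Fin n) ℂ := fun k => G (P k) with hQdef
  have hQ : ∀ k, star (Q k) = Q k ∧ Q k * Q k = Q k := by
    intro k
    exact proj_step G h1 hU (P k) (hPstar k) (by rw [hPmul k k, if_pos rfl])
  have hanti : ∀ k l, k ≠ l → Q k * Q l + Q l * Q k = 0 := by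
    intro k l hkl
    exact orth_step G h1 hU (P k) (P l) (hPstar k) (by rw [hPmul k k, if_pos rfl])
      (hPstar l) (by rw [hPmul l l, if_pos rfl])
      (by rw [hPmul k l, if_neg hkl]) (by rw [hPmul l k, if_neg (Ne.symm hkl)])
  have hGH : G H = ∑ k, (d k : ℂ) • Q k := by
    rw [hsumH, map_sum]
    exact Finset.sum_congr rfl (fun k _ => by rw [_root_.map_smul])
  constructor
  · rw [hGH, star_sum]
    refine Finset.sum_congr rfl (fun k _ => ?_)
    rw [star_smul, (hQ k).1, RCLike.star_def, Complex.conj_ofReal]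
  · have hL : G (H * H) = ∑ k, ((d k : ℂ) * (d k)) • Q k := by
      rw [hsumH2, map_sum]
      exact Finset.sum_congr rfl (fun k _ => by rw [_root_.map_smul])
    rw [hL, hGH, hsumprod]
    symm
    apply halve
    have swap : ∑ k, ∑ l, ((d k : ℂ) * (d l)) • (Q k * Q l)
        = ∑ k, ∑ l, ((d k : ℂ) * (d l)) • (Q l * Q k) := by
      rw [Finset.sum_comm]
      refine Finset.sum_congr rfl (fun k _ => ?_)
      refine Finset.sum_congr rfl (fun l _ => ?_)
      rw [mul_comm]
    have combined : (∑ k, ∑ l, ((d k : ℂ) * (d l)) • (Q k * Q l))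
        + (∑ k, ∑ l, ((d k : ℂ) * (d l)) • (Q k * Q l))
        = ∑ k, ∑ l, ((d k : ℂ) * (d l)) • (Q k * Q l + Q l * Q k) := by
      nth_rewrite 2 [swap]
      rw [← Finset.sum_add_distrib]
      refine Finset.sum_congr rfl (fun k _ => ?_)
      rw [← Finset.sum_add_distrib]
      refine Finset.sum_congr rfl (fun l _ => ?_)
      rw [smul_add]
    rw [combined]
    have inner : ∀ k l, ((d k : ℂ) * (d l)) • (Q k * Q l + Q l * Q k)
        = if k = l then ((d l : ℂ) * (d l)) • (Q l + Q l) else 0 := by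
      intro k l
      by_cases h : k = l
      · subst h
        rw [if_pos rfl, (hQ k).2]
      · rw [if_neg h, hanti k l h, smul_zero]
    rw [Finset.sum_congr rfl (fun k (_ : k ∈ Finset.univ) =>
      Finset.sum_congr rfl (fun l (_ : l ∈ Finset.univ) => inner k l))]
    rw [Finset.sum_congr rfl (fun k (_ : k ∈ Finset.univ) => Finset.sum_ite_eq Finset.univ k
      (fun l => ((d l : ℂ) * (d l)) • (Q l + Q l)))]
    simp only [Finset.mem_univ, if_true, smul_add]
    rw [Finset.sum_add_distrib]
  

private lemma herm_decomp {n : ℕ} (x : Matrix (Fin n) (Fin n) ℂ) :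
    star ((1/2 : ℂ) • (x + star x)) = (1/2 : ℂ) • (x + star x)
  ∧ star ((-Complex.I/2 : ℂ) • (x - star x)) = (-Complex.I/2 : ℂ) • (x - star x)
  ∧ x = (1/2 : ℂ) • (x + star x) + Complex.I • ((-Complex.I/2 : ℂ) • (x - star x)) := by
  refine ⟨?_, ?_, ?_⟩
  · rw [star_smul, star_add, star_star, RCLike.star_def]
    have hc : (starRingEnd ℂ) (1/2 : ℂ) = 1/2 := by
      simp [map_div₀, map_ofNat]
    rw [hc, add_comm (star x) x]
  · rw [star_smul, star_sub, star_star, RCLike.star_def]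
    have hc : (starRingEnd ℂ) (-Complex.I/2 : ℂ) = Complex.I/2 := by
      simp [map_div₀, map_ofNat, Complex.conj_I]
    rw [hc]
    rw [show star x - x = -(x - star x) from (neg_sub x (star x)).symm]
    rw [smul_neg, ← neg_smul, neg_div]
  · rw [smul_smul]
    rw [show Complex.I * (-Complex.I/2) = 1/2 from by
      linear_combination (-1/2 : ℂ) * Complex.I_sq]
    module

private lemma star_and_sq {n : ℕ}
    (G : Matrix (Fin n) (Fin n) ℂ ≃ₗ[ℂ] Matrix (Fin n) (Fin n) ℂ)
    (h1 : G 1 = 1)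
    (hU : ∀ w, w ∈ Matrix.unitaryGroup (Fin n) ℂ → G w ∈ Matrix.unitaryGroup (Fin n) ℂ) :
    (∀ x, G (star x) = star (G x)) ∧ (∀ x, G (x * x) = G x * G x) := by
  have hherm := herm_step G h1 hU
  have hsq2 : ∀ x y, star x = x → star y = y →
      G (x * y + y * x) = G x * G y + G y * G x := by
    intro x y hx hy
    have h := (hherm (x + y) (by rw [star_add, hx, hy])).2
    rw [show (x + y) * (x + y) = x * x + (x * y + y * x) + y * y by noncomm_ring,
      map_add G x y] at h
    rw [map_add, map_add] at h
    have h2 : G (x * y + y * x)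
        = (G x + G y) * (G x + G y) - G (x * x) - G (y * y) := by rw [← h]; abel
    rw [h2, (hherm x hx).2, (hherm y hy).2]
    noncomm_ring
  set J : Matrix (Fin n) (Fin n) ℂ → Matrix (Fin n) (Fin n) ℂ → Prop :=
    fun x y => G (x * y + y * x) = G x * G y + G y * G x with hJdef
  have hJsmul : ∀ x y (c : ℂ), J x y → J x (c • y) := by
    intro x y c h
    rw [hJdef]
    simp only
    rw [show x * (c • y) + (c • y) * x = c • (x * y + y * x) by
      rw [mul_smul_comm, smul_mul_assoc, smul_add]]
    rw [_root_.map_smul, _root_.map_smul, h, smul_add, smul_mul_assoc, mul_smul_comm]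
  have hJadd : ∀ x y1 y2, J x y1 → J x y2 → J x (y1 + y2) := by
    intro x y1 y2 h1' h2'
    rw [hJdef]
    simp only
    rw [show x * (y1 + y2) + (y1 + y2) * x = (x * y1 + y1 * x) + (x * y2 + y2 * x) by
      noncomm_ring]
    rw [map_add, h1', h2', map_add]
    noncomm_ring
  have hJsymm : ∀ x y, J x y → J y x := by
    intro x y h
    rw [hJdef]
    simp only
    rw [add_comm (y * x) (x * y), h]
    abel
  have hJherm1 : ∀ x y, star x = x → J x y := by
    intro x y hx
    obtain ⟨hy1, hy2, hy3⟩ := herm_decomp y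
    have j1 : J x ((1/2 : ℂ) • (y + star y)) := hsq2 x _ hx hy1
    have j2 : J x ((-Complex.I/2 : ℂ) • (y - star y)) := hsq2 x _ hx hy2
    have j3 := hJsmul x _ Complex.I j2
    have j4 := hJadd x _ _ j1 j3
    rw [← hy3] at j4
    exact j4
  have hJ : ∀ x y, J x y := by
    intro x y
    obtain ⟨hx1, hx2, hx3⟩ := herm_decomp x
    have j1 := hJsymm _ _ (hJherm1 _ y hx1)
    have j2 := hJsymm _ _ (hJherm1 _ y hx2)
    have j3 := hJsmul y _ Complex.I j2
    have j4 := hJadd y _ _ j1 j3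
    rw [← hx3] at j4
    exact hJsymm _ _ j4
  constructor
  · intro x
    obtain ⟨hx1, hx2, hx3⟩ := herm_decomp x
    have hsx : star x = (1/2 : ℂ) • (x + star x)
        + (-Complex.I) • ((-Complex.I/2 : ℂ) • (x - star x)) := by
      nth_rewrite 1 [hx3]
      rw [star_add, hx1, star_smul, RCLike.star_def, Complex.conj_I, hx2]
    have hgx : G x = G ((1/2 : ℂ) • (x + star x))
        + Complex.I • G ((-Complex.I/2 : ℂ) • (x - star x)) := by
      nth_rewrite 1 [hx3]
      rw [map_add, _root_.map_smul G Complex.I]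
    rw [hsx, map_add, _root_.map_smul G (-Complex.I), hgx, star_add, star_smul,
      RCLike.star_def, Complex.conj_I, (hherm _ hx1).1, (hherm _ hx2).1]
  · intro x
    have h := hJ x x
    rw [hJdef, map_add] at h
    exact halve h

/-- For `n ≥ 1`, a bijective `ℂ`-linear map `f` of `Mₙ(ℂ)` satisfies
`f(U(n)) = U(n)` if and only if there are unitary `u, v` with `f(x) = uxv` for all `x`,
or `f(x) = uxᵀv` for all `x`. -/
theorem complex_linear_preserver_of_unitary
    (n : ℕ) (hn : 1 ≤ n)
    (f : Matrix (Fin n) (Fin n) ℂ ≃ₗ[ℂ] Matrix (Fin n) (Fin n) ℂ) :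
    f '' (Matrix.unitaryGroup (Fin n) ℂ : Set (Matrix (Fin n) (Fin n) ℂ)) =
      (Matrix.unitaryGroup (Fin n) ℂ : Set (Matrix (Fin n) (Fin n) ℂ))
    ↔ ∃ u v : Matrix (Fin n) (Fin n) ℂ,
        u ∈ Matrix.unitaryGroup (Fin n) ℂ ∧ v ∈ Matrix.unitaryGroup (Fin n) ℂ ∧
        ((∀ x : Matrix (Fin n) (Fin n) ℂ, f x = u * x * v) ∨
         (∀ x : Matrix (Fin n) (Fin n) ℂ, f x = u * xᵀ * v)) := by
  have htU : ∀ x : Matrix (Fin n) (Fin n) ℂ, x ∈ Matrix.unitaryGroup (Fin n) ℂ →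
      xᵀ ∈ Matrix.unitaryGroup (Fin n) ℂ := by
    intro x hx
    rw [Matrix.mem_unitaryGroup_iff']
    have h1 : x * star x = 1 := Matrix.mem_unitaryGroup_iff.mp hx
    have hst : star (xᵀ) = (star x)ᵀ := by
      ext i j; simp [Matrix.star_apply, Matrix.transpose_apply]
    rw [hst, ← Matrix.transpose_mul, h1, Matrix.transpose_one]
  constructor
  · intro hfU
    have h1U : (1 : Matrix (Fin n) (Fin n) ℂ) ∈ Matrix.unitaryGroup (Fin n) ℂ := one_mem _
    have hu : f 1 ∈ Matrix.unitaryGroup (Fin n) ℂ := by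
      have := Set.mem_image_of_mem f h1U
      rwa [hfU] at this
    have huu : star (f 1) * f 1 = 1 := Matrix.mem_unitaryGroup_iff'.mp hu
    have huu' : f 1 * star (f 1) = 1 := Matrix.mem_unitaryGroup_iff.mp hu
    set u : Matrix (Fin n) (Fin n) ℂ := f 1 with hudef
    set L : Matrix (Fin n) (Fin n) ℂ ≃ₗ[ℂ] Matrix (Fin n) (Fin n) ℂ :=
      LinearEquiv.ofLinear (LinearMap.mulLeft ℂ (star u)) (LinearMap.mulLeft ℂ u)
        (by ext x; simp [LinearMap.mulLeft_apply, ← mul_assoc, huu])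
        (by ext x; simp [LinearMap.mulLeft_apply, ← mul_assoc, huu']) with hLdef
    set G := f.trans L with hGdef
    have hGapp : ∀ x, G x = star u * f x := fun x => rfl
    have hG1 : G 1 = 1 := by rw [hGapp]; exact huu
    have hGU : ∀ w, w ∈ Matrix.unitaryGroup (Fin n) ℂ →
        G w ∈ Matrix.unitaryGroup (Fin n) ℂ := by
      intro w hw
      have hfw : f w ∈ Matrix.unitaryGroup (Fin n) ℂ := by
        have := Set.mem_image_of_mem f hw
        rwa [hfU] at this
      rw [hGapp]
      exact mul_mem (Unitary.star_mem hu) hfw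
    obtain ⟨hstar, hsq⟩ := star_and_sq G hG1 hGU
    have hinv : ∀ x, f x = u * G x := by
      intro x
      rw [hGapp, ← mul_assoc, huu', one_mul]
    rcases hom_or_antihom G hsq with hmul | hanti
    · obtain ⟨w, hwU, hGw⟩ := inner_aux hn G hmul hstar
      refine ⟨u * w, star w, mul_mem hu hwU, Unitary.star_mem hwU, Or.inl ?_⟩
      intro x
      rw [hinv, hGw]
      noncomm_ring
    · set T := Matrix.transposeLinearEquiv (Fin n) (Fin n) ℂ ℂ with hTdef
      set G' := T.trans G with hG'def
      have hG'app : ∀ x, G' x = G xᵀ := fun x => rfl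
      have hmul' : ∀ x y, G' (x * y) = G' x * G' y := by
        intro x y
        rw [hG'app, hG'app, hG'app, Matrix.transpose_mul, hanti]
      have hstar' : ∀ x, G' (star x) = star (G' x) := by
        intro x
        rw [hG'app, hG'app, ← hstar]
        congr 1
      obtain ⟨w, hwU, hGw⟩ := inner_aux hn G' hmul' hstar'
      refine ⟨u * w, star w, mul_mem hu hwU, Unitary.star_mem hwU, Or.inr ?_⟩
      intro x
      have hx : G x = w * xᵀ * star w := by
        have := hGw xᵀ
        rwa [hG'app, Matrix.transpose_transpose] at this
      rw [hinv, hx]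
      noncomm_ring
  · rintro ⟨u, v, hu, hv, hcase | hcase⟩
    · have hu1 : u * star u = 1 := Matrix.mem_unitaryGroup_iff.mp hu
      have hv1 : star v * v = 1 := Matrix.mem_unitaryGroup_iff'.mp hv
      apply Set.eq_of_subset_of_subset
      · rintro y ⟨x, hx, rfl⟩
        rw [hcase]
        exact mul_mem (mul_mem hu hx) hv
      · intro y hy
        refine ⟨star u * y * star v,
          mul_mem (mul_mem (Unitary.star_mem hu) hy) (Unitary.star_mem hv), ?_⟩
        rw [hcase]
        have e : u * (star u * y * star v) * v = (u * star u) * y * (star v * v) := by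
          noncomm_ring
        rw [e, hu1, hv1, one_mul, mul_one]
    · have hu1 : u * star u = 1 := Matrix.mem_unitaryGroup_iff.mp hu
      have hv1 : star v * v = 1 := Matrix.mem_unitaryGroup_iff'.mp hv
      apply Set.eq_of_subset_of_subset
      · rintro y ⟨x, hx, rfl⟩
        rw [hcase]
        exact mul_mem (mul_mem hu (htU x hx)) hv
      · intro y hy
        refine ⟨(star u * y * star v)ᵀ,
          htU _ (mul_mem (mul_mem (Unitary.star_mem hu) hy) (Unitary.star_mem hv)), ?_⟩
        rw [hcase, Matrix.transpose_transpose]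
        have e : u * (star u * y * star v) * v = (u * star u) * y * (star v * v) := by
          noncomm_ring
        rw [e, hu1, hv1, one_mul, mul_one]
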